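/- Let X ~ N(μ₁, σ²) and Y ~ N(μ₂, σ²) be two normal distributions with the same variance σ² > 0. Then their total variation distance equals erf(|μ₁ − μ₂|/(2√2·σ)). -/

import Mathlib

/-- The Gauss error function `erf(x) = (2/√π) ∫₀ˣ e^{-t²} dt`. -/
noncomputable def erf (x : ℝ) : ℝ :=
  (2 / Real.sqrt Real.pi) * ∫ t in (0 : ℝ)..x, Real.exp (-t ^ 2)

/-- The density of the normal distribution `N(μ, σ²)`. -/
noncomputable def normalPDF (μ σ x : ℝ) : ℝ :=
  (1 / (σ * Real.sqrt (2 * Real.pi))) * Real.exp (-(x - μ) ^ 2 / (2 * σ ^ 2))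

open MeasureTheory Real Set intervalIntegral

lemma normalPDF_eq (μ σ : ℝ) : normalPDF μ σ = fun x =>
    (1 / (σ * Real.sqrt (2 * Real.pi))) * Real.exp (-(1 / (2 * σ ^ 2)) * (x - μ) ^ 2) := by
  funext x
  unfold normalPDF
  congr 1
  ring_nf

lemma integrable_normalPDF (μ σ : ℝ) (hσ : 0 < σ) : Integrable (normalPDF μ σ) := by
  have hb : (0:ℝ) < 1 / (2 * σ ^ 2) := by positivity
  have h1 : Integrable (fun x : ℝ => Real.exp (-(1 / (2 * σ ^ 2)) * x ^ 2)) :=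
    integrable_exp_neg_mul_sq hb
  have h2 := (h1.comp_sub_right μ).const_mul (1 / (σ * Real.sqrt (2 * Real.pi)))
  rw [normalPDF_eq]
  exact h2

lemma integral_normalPDF (μ σ : ℝ) (hσ : 0 < σ) : ∫ x, normalPDF μ σ x = 1 := by
  rw [normalPDF_eq]
  rw [MeasureTheory.integral_const_mul]
  rw [integral_sub_right_eq_self (μ := volume) (fun x : ℝ => Real.exp (-(1 / (2 * σ ^ 2)) * x ^ 2)) μ]
  rw [integral_gaussian]
  have hπ : (0:ℝ) < Real.pi := Real.pi_pos
  rw [show Real.pi / (1 / (2 * σ ^ 2)) = (2 * Real.pi) * σ ^ 2 by field_simp]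
  have h2 : Real.sqrt (2 * Real.pi * σ ^ 2) = σ * Real.sqrt (2 * Real.pi) := by
    rw [mul_comm, Real.sqrt_mul (sq_nonneg σ), Real.sqrt_sq hσ.le]
  rw [h2]
  have : σ * Real.sqrt (2 * Real.pi) ≠ 0 := by positivity
  field_simp

lemma setIntegral_Iic_shift (f : ℝ → ℝ) (a c : ℝ) :
    ∫ x in Iic (c - a), f (x + a) = ∫ x in Iic c, f x := by
  have A : MeasurableEmbedding (fun x : ℝ => x + a) :=
    (Homeomorph.addRight a).measurableEmbedding
  have h := A.setIntegral_map (μ := volume) f (Iic c)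
  rw [map_add_right_eq_self] at h
  rw [preimage_add_const_Iic] at h
  exact h.symm

lemma normalPDF_zero_neg (σ x : ℝ) : normalPDF 0 σ (-x) = normalPDF 0 σ x := by
  simp [normalPDF, neg_sq]

lemma key_tvd (μ₁ μ₂ σ : ℝ) (hσ : 0 < σ) (hle : μ₁ ≤ μ₂) :
    (1 / 2) * (∫ x, |normalPDF μ₁ σ x - normalPDF μ₂ σ x|) =
      erf ((μ₂ - μ₁) / (2 * Real.sqrt 2 * σ)) := by
  set m : ℝ := (μ₁ + μ₂) / 2 with hm
  have hint1 := integrable_normalPDF μ₁ σ hσ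
  have hint2 := integrable_normalPDF μ₂ σ hσ
  have hint0 := integrable_normalPDF 0 σ hσ
  have hg : Integrable (fun x => normalPDF μ₁ σ x - normalPDF μ₂ σ x) := hint1.sub hint2
  -- sign analysis
  have hsign1 : ∀ x ∈ Iic m, |normalPDF μ₁ σ x - normalPDF μ₂ σ x|
      = normalPDF μ₁ σ x - normalPDF μ₂ σ x := by
    intro x hx
    rw [abs_of_nonneg]
    rw [sub_nonneg]
    unfold normalPDF
    apply mul_le_mul_of_nonneg_left _ (by positivity)
    apply Real.exp_le_exp.mpr
    have hx' : x ≤ m := hx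
    have hx2 : 2 * x ≤ μ₁ + μ₂ := by rw [hm] at hx'; linarith
    have hnum : -(x - μ₂) ^ 2 ≤ -(x - μ₁) ^ 2 := by nlinarith [hx2, hle]
    have h2σ : (0:ℝ) ≤ 2 * σ ^ 2 := by positivity
    exact div_le_div_of_nonneg_right hnum h2σ |>.trans_eq rfl
  have hsign2 : ∀ x ∈ Ioi m, |normalPDF μ₁ σ x - normalPDF μ₂ σ x|
      = normalPDF μ₂ σ x - normalPDF μ₁ σ x := by
    intro x hx
    rw [abs_sub_comm, abs_of_nonneg]
    rw [sub_nonneg]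
    unfold normalPDF
    apply mul_le_mul_of_nonneg_left _ (by positivity)
    apply Real.exp_le_exp.mpr
    have hx' : m ≤ x := le_of_lt hx
    have hx2 : μ₁ + μ₂ ≤ 2 * x := by rw [hm] at hx'; linarith
    have hnum : -(x - μ₁) ^ 2 ≤ -(x - μ₂) ^ 2 := by nlinarith [hx2, hle]
    have h2σ : (0:ℝ) ≤ 2 * σ ^ 2 := by positivity
    exact div_le_div_of_nonneg_right hnum h2σ |>.trans_eq rfl
  -- split the integral at m
  have hsplit : (∫ x, |normalPDF μ₁ σ x - normalPDF μ₂ σ x|)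
      = (∫ x in Iic m, |normalPDF μ₁ σ x - normalPDF μ₂ σ x|)
        + ∫ x in Ioi m, |normalPDF μ₁ σ x - normalPDF μ₂ σ x| :=
    (integral_Iic_add_Ioi hg.abs.integrableOn hg.abs.integrableOn).symm
  have e1 : (∫ x in Iic m, |normalPDF μ₁ σ x - normalPDF μ₂ σ x|)
      = (∫ x in Iic m, normalPDF μ₁ σ x) - ∫ x in Iic m, normalPDF μ₂ σ x := by
    rw [setIntegral_congr_fun measurableSet_Iic hsign1,
      integral_sub hint1.integrableOn hint2.integrableOn]
  have e2 : (∫ x in Ioi m, |normalPDF μ₁ σ x - normalPDF μ₂ σ x|)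
      = (∫ x in Ioi m, normalPDF μ₂ σ x) - ∫ x in Ioi m, normalPDF μ₁ σ x := by
    rw [setIntegral_congr_fun measurableSet_Ioi hsign2,
      integral_sub hint2.integrableOn hint1.integrableOn]
  have h1tot : (∫ x in Iic m, normalPDF μ₁ σ x) + ∫ x in Ioi m, normalPDF μ₁ σ x = 1 := by
    rw [integral_Iic_add_Ioi hint1.integrableOn hint1.integrableOn, integral_normalPDF μ₁ σ hσ]
  have h2tot : (∫ x in Iic m, normalPDF μ₂ σ x) + ∫ x in Ioi m, normalPDF μ₂ σ x = 1 := by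
    rw [integral_Iic_add_Ioi hint2.integrableOn hint2.integrableOn, integral_normalPDF μ₂ σ hσ]
  have hhalf : (1 / 2) * (∫ x, |normalPDF μ₁ σ x - normalPDF μ₂ σ x|)
      = (∫ x in Iic m, normalPDF μ₁ σ x) - ∫ x in Iic m, normalPDF μ₂ σ x := by
    rw [hsplit, e1, e2]; linarith
  rw [hhalf]
  -- translation to centered density
  set y : ℝ := (μ₂ - μ₁) / 2 with hy
  have t1 : (∫ x in Iic m, normalPDF μ₁ σ x) = ∫ x in Iic y, normalPDF 0 σ x := by
    have := setIntegral_Iic_shift (normalPDF μ₁ σ) μ₁ m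
    rw [← this, show m - μ₁ = y by rw [hm, hy]; ring]
    refine setIntegral_congr_fun measurableSet_Iic fun x _ => ?_
    simp [normalPDF]
  have t2 : (∫ x in Iic m, normalPDF μ₂ σ x) = ∫ x in Iic (-y), normalPDF 0 σ x := by
    have := setIntegral_Iic_shift (normalPDF μ₂ σ) μ₂ m
    rw [← this, show m - μ₂ = -y by rw [hm, hy]; ring]
    refine setIntegral_congr_fun measurableSet_Iic fun x _ => ?_
    simp [normalPDF]
  rw [t1, t2, integral_Iic_sub_Iic hint0.integrableOn hint0.integrableOn]
  -- evenness: ∫ in -y..y = 2 ∫ in 0..y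
  have hii : ∀ a b : ℝ, IntervalIntegrable (normalPDF 0 σ) volume a b :=
    fun a b => hint0.intervalIntegrable
  have heven : (∫ x in (-y)..y, normalPDF 0 σ x) = 2 * ∫ x in (0:ℝ)..y, normalPDF 0 σ x := by
    rw [← integral_add_adjacent_intervals (hii (-y) 0) (hii 0 y)]
    have hneg : (∫ x in (0:ℝ)..y, normalPDF 0 σ (-x)) = ∫ x in (-y)..(0:ℝ), normalPDF 0 σ x := by
      simpa using intervalIntegral.integral_comp_neg (a := (0:ℝ)) (b := y) (normalPDF 0 σ)
    have : (∫ x in (-y)..(0:ℝ), normalPDF 0 σ x) = ∫ x in (0:ℝ)..y, normalPDF 0 σ x := by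
      rw [← hneg]
      exact intervalIntegral.integral_congr fun x _ => normalPDF_zero_neg σ x
    rw [this]; ring
  rw [heven]
  -- substitution x = √2 σ t
  set k : ℝ := Real.sqrt 2 * σ with hk
  have hk0 : (0:ℝ) < k := by positivity
  set s : ℝ := (μ₂ - μ₁) / (2 * Real.sqrt 2 * σ) with hs
  have hks : k * s = y := by
    rw [hk, hs, hy]
    have : Real.sqrt 2 ≠ 0 := by positivity
    field_simp
  have hsub : (∫ t in (0:ℝ)..s, normalPDF 0 σ (k * t))
      = k⁻¹ * ∫ x in (0:ℝ)..y, normalPDF 0 σ x := by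
    rw [intervalIntegral.integral_comp_mul_left (normalPDF 0 σ) hk0.ne']
    rw [mul_zero, hks, smul_eq_mul]
  have hval : ∀ t : ℝ, normalPDF 0 σ (k * t)
      = (1 / (σ * Real.sqrt (2 * Real.pi))) * Real.exp (-t ^ 2) := by
    intro t
    unfold normalPDF
    congr 1
    rw [hk]
    rw [show (Real.sqrt 2 * σ * t - 0) ^ 2 = Real.sqrt 2 ^ 2 * σ ^ 2 * t ^ 2 by ring]
    rw [Real.sq_sqrt (by norm_num : (0:ℝ) ≤ 2)]
    field_simp
  have hsub2 : (∫ x in (0:ℝ)..y, normalPDF 0 σ x)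
      = k * ((1 / (σ * Real.sqrt (2 * Real.pi))) * ∫ t in (0:ℝ)..s, Real.exp (-t ^ 2)) := by
    have hcg : (∫ t in (0:ℝ)..s, normalPDF 0 σ (k * t))
        = ∫ t in (0:ℝ)..s, (1 / (σ * Real.sqrt (2 * Real.pi))) * Real.exp (-t ^ 2) :=
      intervalIntegral.integral_congr fun t _ => hval t
    rw [← intervalIntegral.integral_const_mul, ← hcg, hsub, ← mul_assoc,
      mul_inv_cancel₀ hk0.ne', one_mul]
  rw [hsub2, erf]
  have h2π : Real.sqrt (2 * Real.pi) = Real.sqrt 2 * Real.sqrt Real.pi :=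
    Real.sqrt_mul (by norm_num) _
  rw [hk, h2π]
  have hπ : Real.sqrt Real.pi ≠ 0 := by positivity
  have h2 : Real.sqrt 2 ≠ 0 := by positivity
  field_simp

/-- The total variation distance of two normal distributions with means
    `μ₁, μ₂` and common standard deviation `σ > 0` equals
    `erf(|μ₁ - μ₂|/(2√2 σ))`. -/
theorem equal_variance_normal_tvd (μ₁ μ₂ σ : ℝ) (hσ : 0 < σ) :
    (1 / 2) * (∫ x, |normalPDF μ₁ σ x - normalPDF μ₂ σ x|) =
      erf (|μ₁ - μ₂| / (2 * Real.sqrt 2 * σ)) := by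
  rcases le_total μ₁ μ₂ with h | h
  · rw [abs_sub_comm, abs_of_nonneg (sub_nonneg.mpr h)]
    exact key_tvd μ₁ μ₂ σ hσ h
  · rw [abs_of_nonneg (sub_nonneg.mpr h)]
    simp_rw [abs_sub_comm (normalPDF μ₁ σ _)]
    exact key_tvd μ₂ μ₁ σ hσ h
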